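/- For every integer n ≥ 3 and every real number θ, P_n(cos θ) = - sin θ · sin((n-1)θ). -/
import Mathlib


open Finset Polynomial Real

noncomputable section

/-- Binomial coefficient `C(a, b)` for integer lower index, zero when `b < 0` or `b > a`. -/
def chooseZ (a : ℕ) (b : ℤ) : ℤ := if 0 ≤ b then (a.choose b.toNat : ℤ) else 0

/-- `f n k m p = ∑_{i=0}^{n} (-1)^i C(n,i) C(np+m-ip, n+k)`. -/
def f (n : ℕ) (k : ℤ) (m p : ℕ) : ℤ :=
  ∑ i ∈ Finset.range (n + 1),
    (-1) ^ i * (n.choose i : ℤ) * chooseZ (n * p + m - i * p) ((n : ℤ) + k)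

/-- The coefficients `c(n,k,m,p)`. -/
def c (n : ℕ) (k : ℤ) (m p : ℕ) : ℤ :=
  if 0 ≤ k ∧ k ≤ (n : ℤ) ∧ (n : ℤ) % 2 = k % 2 ∧ 2 * (m : ℤ) ≤ (n : ℤ) + k then
    (-1) ^ ((((n : ℤ) - k) / 2).toNat) *
      f ((((n : ℤ) + k - 2 * m) / 2).toNat) (((n : ℤ) - k) / 2) m p
  else 0

/-- The polynomial `P_{n,m,p}(x) = ∑_{k=0}^n c(n,k,m,p) x^k`, as a real polynomial. -/
def P (n m p : ℕ) : Polynomial ℝ :=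
  ∑ k ∈ Finset.range (n + 1), Polynomial.C ((c n (k : ℤ) m p : ℝ)) * Polynomial.X ^ k

/-! ### Auxiliary lemmas -/

lemma chooseZ_succ (a : ℕ) (b : ℤ) :
    chooseZ (a+1) b = chooseZ a b + chooseZ a (b-1) := by
  unfold chooseZ
  rcases lt_trichotomy b 0 with h | h | h
  · rw [if_neg (by omega), if_neg (by omega), if_neg (by omega)]; ring
  · subst h; norm_num
  · rw [if_pos (by omega), if_pos (by omega), if_pos (by omega)]
    have hb : b.toNat = (b-1).toNat + 1 := by omega
    rw [hb, Nat.choose_succ_succ', ← hb]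
    push_cast; ring

lemma chooseZ_add_two (a : ℕ) (b : ℤ) :
    chooseZ (a+2) b = chooseZ a b + 2 * chooseZ a (b-1) + chooseZ a (b-2) := by
  rw [show a+2 = (a+1)+1 from rfl, chooseZ_succ, chooseZ_succ, chooseZ_succ]
  have : b - 1 - 1 = b - 2 := by ring
  rw [this]; ring

lemma chooseZ_eq_zero (a : ℕ) (b : ℤ) (h : (a:ℤ) < b) : chooseZ a b = 0 := by
  unfold chooseZ
  rw [if_pos (by omega)]
  norm_num [Nat.choose_eq_zero_of_lt (show a < b.toNat by omega)]

lemma frec (N : ℕ) (K : ℤ) :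
    f (N+1) (K+1) 2 2 = 2 * f N (K+1) 2 2 + f N K 2 2 := by
  have hb1 : ((N:ℤ)+1) + (K+1) = (N:ℤ) + K + 2 := by ring
  have hb2 : (N:ℤ) + (K+1) = ((N:ℤ) + K + 2) - 1 := by ring
  have hb3 : (N:ℤ) + K = ((N:ℤ) + K + 2) - 2 := by ring
  set b : ℤ := (N:ℤ) + K + 2 with hb
  unfold f
  push_cast
  rw [hb1, hb2, hb3]
  set B : ℕ → ℤ := fun i => chooseZ (N*2+2 - i*2) b with hB
  rw [Finset.sum_range_succ']
  have e1 : ∀ i ∈ Finset.range (N+1),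
      (-1:ℤ)^(i+1) * ((N+1).choose (i+1) : ℤ) * chooseZ ((N+1)*2+2 - (i+1)*2) b
      = -((-1)^i * (N.choose i : ℤ) * B i) - (-1)^i * (N.choose (i+1) : ℤ) * B i := by
    intro i hi
    have h2 : (N+1)*2+2 - (i+1)*2 = N*2+2 - i*2 := by omega
    rw [h2, Nat.choose_succ_succ']
    push_cast; ring
  rw [Finset.sum_congr rfl e1]
  have aux : ∑ i ∈ Finset.range (N+1), (-1:ℤ)^i * (N.choose i : ℤ) * chooseZ (N*2+4 - i*2) b
      = -(∑ i ∈ Finset.range (N+1), (-1:ℤ)^i * (N.choose (i+1) : ℤ) * B i)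
        + chooseZ ((N+1)*2+2 - 0*2) b := by
    rw [Finset.sum_range_succ']
    have e2 : ∀ i ∈ Finset.range N,
        (-1:ℤ)^(i+1) * (N.choose (i+1) : ℤ) * chooseZ (N*2+4 - (i+1)*2) b
        = -((-1)^i * (N.choose (i+1) : ℤ) * B i) := by
      intro i hi
      have h2 : N*2+4 - (i+1)*2 = N*2+2 - i*2 := by omega
      rw [h2]; push_cast; ring
    rw [Finset.sum_congr rfl e2]
    rw [Finset.sum_range_succ (fun i => (-1:ℤ)^i * (N.choose (i+1) : ℤ) * B i)]
    have hz : (N.choose (N+1) : ℤ) = 0 := by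
      norm_num [Nat.choose_eq_zero_of_lt]
    have h3 : (N+1)*2+2 - 0*2 = N*2+4 - 0*2 := by omega
    rw [hz, h3]
    simp [Finset.sum_neg_distrib]
  have exp : ∀ i ∈ Finset.range (N+1),
      (-1:ℤ)^i * (N.choose i : ℤ) * chooseZ (N*2+4 - i*2) b
      = (-1)^i * (N.choose i : ℤ) * B i
        + 2 * ((-1)^i * (N.choose i : ℤ) * chooseZ (N*2+2 - i*2) (b-1))
        + (-1)^i * (N.choose i : ℤ) * chooseZ (N*2+2 - i*2) (b-2) := by
    intro i hi
    simp only [Finset.mem_range] at hi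
    have h2 : N*2+4 - i*2 = (N*2+2 - i*2) + 2 := by omega
    rw [h2, chooseZ_add_two]
    ring
  have aux2 := Finset.sum_congr rfl exp
  rw [aux2] at aux
  simp only [Finset.sum_add_distrib, Finset.sum_sub_distrib, Finset.sum_neg_distrib,
    ← Finset.mul_sum, pow_zero, Nat.choose_zero_right, Nat.cast_one, one_mul] at aux ⊢
  linarith [aux]

lemma fneg (N : ℕ) : ∀ K : ℤ, K < 0 → f N K 2 2 = 0 := by
  induction N with
  | zero =>
    intro K hK
    have h : f 0 K 2 2 = chooseZ 2 K := by simp [f]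
    rw [h, chooseZ, if_neg (by omega)]
  | succ N ih =>
    intro K hK
    have h := frec N (K-1)
    have h1 : K - 1 + 1 = K := by ring
    rw [h1] at h
    rw [h, ih K hK, ih (K-1) (by omega)]
    ring

lemma fbig (N : ℕ) (K : ℤ) (h : (N:ℤ) + 2 < K) : f N K 2 2 = 0 := by
  unfold f
  apply Finset.sum_eq_zero
  intro i hi
  rw [chooseZ_eq_zero]
  · ring
  · simp only [Finset.mem_range] at hi
    have : N * 2 + 2 - i * 2 ≤ N * 2 + 2 := by omega
    push_cast
    omega

lemma c_eq (n : ℕ) (k K N : ℤ) (hk0 : 0 ≤ k) (hkn : k ≤ (n:ℤ))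
    (hK : (n:ℤ) - k = 2*K) (hN : (n:ℤ) + k - 4 = 2*N) (hN0 : 0 ≤ N) :
    c n k 2 2 = (-1)^K.toNat * f N.toNat K 2 2 := by
  rw [c, if_pos]
  · have h1 : ((n:ℤ) - k) / 2 = K := by omega
    have h2 : ((n:ℤ) + k - 2 * (2:ℕ)) / 2 = N := by push_cast; omega
    rw [h1, h2]
  · refine ⟨hk0, hkn, by omega, by push_cast; omega⟩

lemma crec (n : ℕ) (hn : 3 ≤ n) (k : ℤ) (hk0 : 0 ≤ k) (hk2 : k ≤ (n:ℤ) + 2) :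
    c (n+2) k 2 2 = 2 * c (n+1) (k-1) 2 2 - c n k 2 2 := by
  by_cases hp : (n:ℤ) % 2 = k % 2
  · rcases eq_or_lt_of_le hk2 with hk | hk2'
    · subst hk
      have hL := c_eq (n+2) ((n:ℤ)+2) 0 (n:ℤ) (by omega) (by push_cast; omega)
        (by push_cast; omega) (by push_cast; omega) (by omega)
      have hM := c_eq (n+1) ((n:ℤ)+2-1) 0 ((n:ℤ)-1) (by omega) (by push_cast; omega)
        (by push_cast; omega) (by push_cast; omega) (by omega)
      have hR : c n ((n:ℤ)+2) 2 2 = 0 := by rw [c, if_neg]; omega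
      have e1 : ((n:ℤ)).toNat = n - 1 + 1 := by omega
      have e2 : ((n:ℤ)-1).toNat = n - 1 := by omega
      rw [e1] at hL
      rw [e2] at hM
      have hfr := frec (n-1) (-1)
      norm_num at hfr
      rw [hL, hM, hR, hfr, fneg _ (-1) (by omega)]
      ring
    · have hkn : k ≤ (n:ℤ) := by omega
      obtain ⟨K, hK⟩ : ∃ K, (n:ℤ) - k = 2*K := ⟨((n:ℤ)-k)/2, by omega⟩
      rcases eq_or_lt_of_le hk0 with hk0' | hk1
      · have hk : k = 0 := hk0'.symm
        subst hk
        have hn4 : 4 ≤ n := by omega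
        obtain ⟨N, hN⟩ : ∃ N, (n:ℤ) - 4 = 2*N := ⟨((n:ℤ)-4)/2, by omega⟩
        have hL := c_eq (n+2) 0 (K+1) (N+1) (by omega) (by push_cast; omega)
          (by push_cast; omega) (by push_cast; omega) (by omega)
        have hM : c (n+1) (0-1) 2 2 = 0 := by rw [c, if_neg]; omega
        have hR := c_eq n 0 K N (by omega) (by omega) (by omega) (by omega) (by omega)
        rw [hL, hM, hR]
        have h1 : (K+1).toNat = K.toNat + 1 := by omega
        have h2 : (N+1).toNat = N.toNat + 1 := by omega
        rw [h1, h2, frec N.toNat K, fbig N.toNat (K+1) (by omega)]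
        ring
      · obtain ⟨N, hN⟩ : ∃ N, (n:ℤ) + k - 4 = 2*N := ⟨((n:ℤ)+k-4)/2, by omega⟩
        have hN0 : 0 ≤ N := by omega
        have hL := c_eq (n+2) k (K+1) (N+1) hk0 (by push_cast; omega)
          (by push_cast; omega) (by push_cast; omega) (by omega)
        have hM := c_eq (n+1) (k-1) (K+1) N (by omega) (by push_cast; omega)
          (by push_cast; omega) (by push_cast; omega) hN0
        have hR := c_eq n k K N hk0 hkn hK hN hN0
        rw [hL, hM, hR]
        have h1 : (K+1).toNat = K.toNat + 1 := by omega
        have h2 : (N+1).toNat = N.toNat + 1 := by omega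
        rw [h1, h2, frec N.toNat K]
        ring
  · rw [c, if_neg (by push_cast; omega), c, if_neg (by push_cast; omega),
      c, if_neg (by push_cast; omega)]
    ring

lemma c_gt (n : ℕ) (k : ℤ) (h : (n:ℤ) < k) : c n k 2 2 = 0 := by
  rw [c, if_neg]; omega

lemma Prec (n : ℕ) (hn : 3 ≤ n) :
    P (n+2) 2 2 = 2 * Polynomial.X * P (n+1) 2 2 - P n 2 2 := by
  have e : ∀ k ∈ Finset.range (n+3),
      Polynomial.C ((c (n+2) (k:ℤ) 2 2 : ℝ)) * Polynomial.X ^ k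
      = 2 * (Polynomial.C ((c (n+1) ((k:ℤ)-1) 2 2 : ℝ)) * Polynomial.X ^ k)
        - Polynomial.C ((c n (k:ℤ) 2 2 : ℝ)) * Polynomial.X ^ k := by
    intro k hk
    simp only [Finset.mem_range] at hk
    rw [crec n hn k (by omega) (by push_cast; omega)]
    push_cast
    rw [map_sub, map_mul, map_ofNat]
    ring
  have h1 : P (n+2) 2 2 = ∑ k ∈ Finset.range (n+3),
      Polynomial.C ((c (n+2) (k:ℤ) 2 2 : ℝ)) * Polynomial.X ^ k := rfl
  rw [h1, Finset.sum_congr rfl e, Finset.sum_sub_distrib, ← Finset.mul_sum]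
  congr 1
  · rw [Finset.sum_range_succ']
    have e2 : ∀ k ∈ Finset.range (n+2),
        Polynomial.C ((c (n+1) ((k+1:ℕ)-1 : ℤ) 2 2 : ℝ)) * Polynomial.X ^ (k+1)
        = Polynomial.X * (Polynomial.C ((c (n+1) (k:ℤ) 2 2 : ℝ)) * Polynomial.X ^ k) := by
      intro k hk
      have : ((k+1:ℕ) : ℤ) - 1 = (k : ℤ) := by push_cast; ring
      rw [this]; ring
    have hc0 : Polynomial.C ((c (n+1) (((0:ℕ):ℤ) - 1) 2 2 : ℝ)) * Polynomial.X ^ 0 = 0 := by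
      have hz : c (n+1) (((0:ℕ):ℤ) - 1) 2 2 = 0 := by rw [c, if_neg]; omega
      rw [hz]; simp
    rw [Finset.sum_congr rfl e2, ← Finset.mul_sum, hc0, add_zero]
    rw [show (P (n+1) 2 2) = ∑ k ∈ Finset.range (n+2),
      Polynomial.C ((c (n+1) (k:ℤ) 2 2 : ℝ)) * Polynomial.X ^ k from rfl]
    ring
  · rw [show n+3 = (n+1)+1+1 from rfl, Finset.sum_range_succ, Finset.sum_range_succ]
    have z1 : c n ((n+1 : ℕ) : ℤ) 2 2 = 0 := c_gt n _ (by push_cast; omega)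
    have z2 : c n (((n+1)+1 : ℕ) : ℤ) 2 2 = 0 := c_gt n _ (by push_cast; omega)
    rw [z1, z2]
    simp [P]

lemma T3 : Chebyshev.T ℝ 3 = 2 * X * (2 * X ^ 2 - 1) - X := by
  have h := Chebyshev.T_add_two ℝ 1
  norm_num [Chebyshev.T_two, Chebyshev.T_one] at h
  rw [h]

lemma T4 : Chebyshev.T ℝ 4 = 2 * X * (2 * X * (2 * X ^ 2 - 1) - X) - (2 * X ^ 2 - 1) := by
  have h := Chebyshev.T_add_two ℝ 2
  norm_num [Chebyshev.T_two, T3] at h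
  rw [h]

lemma Pbase3 : 2 * P 3 2 2 = Chebyshev.T ℝ ((3:ℕ):ℤ) - Chebyshev.T ℝ (((3:ℕ):ℤ) - 2) := by
  have c0 : c 3 ((0:ℕ):ℤ) 2 2 = 0 := by decide
  have c1 : c 3 ((1:ℕ):ℤ) 2 2 = -2 := by decide
  have c2 : c 3 ((2:ℕ):ℤ) 2 2 = 0 := by decide
  have c3 : c 3 ((3:ℕ):ℤ) 2 2 = 2 := by decide
  have h : P 3 2 2 = ∑ k ∈ Finset.range 4, Polynomial.C ((c 3 (k:ℤ) 2 2 : ℝ)) * X ^ k := rfl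
  rw [h, Finset.sum_range_succ, Finset.sum_range_succ, Finset.sum_range_succ,
    Finset.sum_range_one, c0, c1, c2, c3]
  have e : (((3:ℕ):ℤ) - 2) = 1 := by norm_num
  have e2 : (((3:ℕ):ℤ)) = 3 := by norm_num
  rw [e, e2, T3, Chebyshev.T_one]
  push_cast
  simp only [map_neg, map_ofNat, map_zero, map_one]
  ring

lemma Pbase4 : 2 * P 4 2 2 = Chebyshev.T ℝ ((4:ℕ):ℤ) - Chebyshev.T ℝ (((4:ℕ):ℤ) - 2) := by
  have c0 : c 4 ((0:ℕ):ℤ) 2 2 = 1 := by decide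
  have c1 : c 4 ((1:ℕ):ℤ) 2 2 = 0 := by decide
  have c2 : c 4 ((2:ℕ):ℤ) 2 2 = -5 := by decide
  have c3 : c 4 ((3:ℕ):ℤ) 2 2 = 0 := by decide
  have c4 : c 4 ((4:ℕ):ℤ) 2 2 = 4 := by decide
  have h : P 4 2 2 = ∑ k ∈ Finset.range 5, Polynomial.C ((c 4 (k:ℤ) 2 2 : ℝ)) * X ^ k := rfl
  rw [h, Finset.sum_range_succ, Finset.sum_range_succ, Finset.sum_range_succ,
    Finset.sum_range_succ, Finset.sum_range_one, c0, c1, c2, c3, c4]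
  have e : (((4:ℕ):ℤ) - 2) = 2 := by norm_num
  have e2 : (((4:ℕ):ℤ)) = 4 := by norm_num
  rw [e, e2, T4, Chebyshev.T_two]
  push_cast
  simp only [map_neg, map_ofNat, map_zero, map_one]
  ring

lemma P_eq : ∀ n : ℕ, 3 ≤ n →
    2 * P n 2 2 = Chebyshev.T ℝ (n:ℤ) - Chebyshev.T ℝ ((n:ℤ) - 2) := by
  intro n
  induction n using Nat.strong_induction_on with
  | _ n ih =>
    intro hn
    match n, hn with
    | 3, _ => exact Pbase3
    | 4, _ => exact Pbase4
    | (m+5), _ =>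
      have h1 := ih (m+3) (by omega) (by omega)
      have h2 := ih (m+4) (by omega) (by omega)
      have hP := Prec (m+3) (by omega)
      rw [show m+5 = (m+3)+2 from rfl, hP]
      have t1 := Chebyshev.T_add_two ℝ ((m:ℤ)+3)
      have t2 := Chebyshev.T_add_two ℝ ((m:ℤ)+1)
      push_cast at h1 h2 t1 t2 ⊢
      have e1 : (m:ℤ)+3+2 = (m:ℤ)+5 := by ring
      have e2 : (m:ℤ)+3+1 = (m:ℤ)+4 := by ring
      have e3 : (m:ℤ)+1+2 = (m:ℤ)+3 := by ring
      have e4 : (m:ℤ)+1+1 = (m:ℤ)+2 := by ring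
      have e5 : (m:ℤ)+5-2 = (m:ℤ)+3 := by ring
      have e6 : (m:ℤ)+4-2 = (m:ℤ)+2 := by ring
      have e7 : (m:ℤ)+3-2 = (m:ℤ)+1 := by ring
      rw [e1, e2] at t1
      rw [e3, e4] at t2
      rw [e6] at h2
      rw [e7] at h1
      rw [e1, e5]
      linear_combination 2*X*h2 - h1 - t1 + t2

/-- For n ≥ 3 and every real θ, `P_n(cos θ) = - sin θ · sin((n-1)θ)`. -/
theorem statement2 (n : ℕ) (hn : 3 ≤ n) (θ : ℝ) :
    (P n 2 2).eval (Real.cos θ) = - (Real.sin θ * Real.sin (((n : ℝ) - 1) * θ)) := by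
  have h := congrArg (Polynomial.eval (Real.cos θ)) (P_eq n hn)
  simp only [Polynomial.eval_mul, Polynomial.eval_sub, Polynomial.eval_ofNat,
    Chebyshev.T_real_cos] at h
  push_cast at h
  rw [Real.cos_sub_cos] at h
  have e1 : ((n:ℝ)*θ + ((n:ℝ)-2)*θ)/2 = ((n:ℝ)-1)*θ := by ring
  have e2 : ((n:ℝ)*θ - ((n:ℝ)-2)*θ)/2 = θ := by ring
  rw [e1, e2] at h
  linarith [h]
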